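/- For all integers d ≥ 1, k ≥ 2, h ≥ 2 and r ≥ kh, there exists N such that for all n ≥ N, every subset A ⊆ [n]^d with |A| ≥ n^d/log n, and every r-template P of A satisfying R(P) ≤ |A|^{k(h−1)+1}/(log n)^{5kh}, the set X_{≥kh}(P) := {x ∈ A : |P(x)| ≥ kh} satisfies |X_{≥kh}(P)| ≤ |A|/(log n)^4. -/

import Mathlib

open Finset

/-- The `d`-dimensional grid `[n]^d = {1,…,n}^d`, as a finset of functions `Fin d → ℕ`. -/
def grid (n d : ℕ) : Finset (Fin d → ℕ) :=
  Fintype.piFinset fun _ => Finset.Icc 1 n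

/-- `X` is a `B_{k,h}`-solution set: `X` consists of `k*h` (pairwise distinct) points that can
be partitioned into `k` groups of `h` points each, all groups having the same sum. -/
def IsBkhSol (d k h : ℕ) (X : Finset (Fin d → ℕ)) : Prop :=
  X.card = k * h ∧
  ∃ P : Fin k → Finset (Fin d → ℕ),
    (∀ ℓ, (P ℓ).card = h) ∧
    (∀ ℓ₁ ℓ₂, ℓ₁ ≠ ℓ₂ → Disjoint (P ℓ₁) (P ℓ₂)) ∧
    Finset.univ.biUnion P = X ∧
    (∀ ℓ₁ ℓ₂ : Fin k, (P ℓ₁).sum id = (P ℓ₂).sum id)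

/-- The coloring `c` of `A` has a rainbow solution to the `B_{k,h}`-equation. -/
def HasRainbow (d k h r : ℕ) (A : Finset (Fin d → ℕ)) (c : ↥A → Fin r) : Prop :=
  ∃ X : Finset ↥A, IsBkhSol d k h (X.image Subtype.val) ∧ Set.InjOn c ↑X

/-- `gr d k h r A` is the number of `r`-colorings of `A` without rainbow solutions to the
`B_{k,h}`-equation. -/
noncomputable def gr (d k h r : ℕ) (A : Finset (Fin d → ℕ)) : ℕ :=
  Nat.card {c : ↥A → Fin r // ¬ HasRainbow d k h r A c}

/-- `fdkh d k h A` is the number of `B_{k,h}`-solution sets contained in `A`. -/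
noncomputable def fdkh (d k h : ℕ) (A : Finset (Fin d → ℕ)) : ℕ :=
  Nat.card {X : Finset (Fin d → ℕ) // X ⊆ A ∧ IsBkhSol d k h X}

/-- `S` is a rainbow-solution subtemplate of the `r`-template `P` of `A`: a `B_{k,h}`-solution
set in `A` together with an injective assignment of colors from the palettes of `P`. -/
def IsRainbowSub (d k h r : ℕ) (A : Finset (Fin d → ℕ))
    (P : (Fin d → ℕ) → Finset (Fin r)) (S : Finset ((Fin d → ℕ) × Fin r)) : Prop :=
  Set.InjOn Prod.fst (S : Set ((Fin d → ℕ) × Fin r)) ∧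
  Set.InjOn Prod.snd (S : Set ((Fin d → ℕ) × Fin r)) ∧
  S.image Prod.fst ⊆ A ∧ IsBkhSol d k h (S.image Prod.fst) ∧
  ∀ p ∈ S, p.2 ∈ P p.1

/-- `rainbowCount d k h r A P` is the number `R(P)` of rainbow-solution subtemplates of `P`. -/
noncomputable def rainbowCount (d k h r : ℕ) (A : Finset (Fin d → ℕ))
    (P : (Fin d → ℕ) → Finset (Fin r)) : ℕ :=
  Nat.card {S : Finset ((Fin d → ℕ) × Fin r) // IsRainbowSub d k h r A P S}

lemma sum_cancel {M : Type*} [AddCancelCommMonoid M] {ι : Type*} [Fintype ι] [DecidableEq ι]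
    (f g : ι → M) (i0 : ι) (hsum : ∑ i, f i = ∑ i, g i)
    (hoff : ∀ i, i ≠ i0 → f i = g i) : f i0 = g i0 := by
  have h1 : f i0 + ∑ i ∈ univ.erase i0, f i = ∑ i, f i :=
    Finset.add_sum_erase _ f (mem_univ i0)
  have h2 : g i0 + ∑ i ∈ univ.erase i0, g i = ∑ i, g i :=
    Finset.add_sum_erase _ g (mem_univ i0)
  have h3 : ∑ i ∈ univ.erase i0, f i = ∑ i ∈ univ.erase i0, g i :=
    Finset.sum_congr rfl fun i hi => hoff i (Finset.ne_of_mem_erase hi)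
  have := h1.trans (hsum.trans h2.symm)
  rw [h3] at this
  exact add_right_cancel this

lemma grid_card (n d : ℕ) : (grid n d).card = n ^ d := by
  simp [grid, Fintype.card_piFinset, Nat.card_Icc]

lemma sum_mem_grid {n d hh : ℕ} (hh1 : 1 ≤ hh) (u : Fin hh → (Fin d → ℕ))
    (hu : ∀ i, u i ∈ grid n d) : (∑ i, u i) ∈ grid (hh * n) d := by
  simp only [grid, Fintype.mem_piFinset, Finset.mem_Icc] at hu ⊢
  intro j
  rw [Finset.sum_apply]
  constructor
  · calc (1 : ℕ) ≤ hh * 1 := by omega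
    _ = (univ : Finset (Fin hh)).card • 1 := by simp [mul_comm]
    _ ≤ ∑ i, u i j := Finset.card_nsmul_le_sum _ _ _ fun i _ => (hu i j).1
  · calc ∑ i, u i j ≤ (univ : Finset (Fin hh)).card • n :=
        Finset.sum_le_card_nsmul _ _ _ fun i _ => (hu i j).2
    _ = hh * n := by simp [mul_comm]

lemma hall_coloring {d r kk : ℕ} (hr : 0 < r) (X : Finset (Fin d → ℕ))
    (P : (Fin d → ℕ) → Finset (Fin r)) (hX : ∀ x ∈ X, kk ≤ (P x).card)
    (hcard : X.card ≤ kk) :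
    ∃ φ : (Fin d → ℕ) → Fin r, Set.InjOn φ X ∧ ∀ x ∈ X, φ x ∈ P x := by
  classical
  have hhall : ∀ s : Finset ↥X, s.card ≤ (s.biUnion fun x => P x.val).card := by
    intro s
    rcases s.eq_empty_or_nonempty with rfl | ⟨x, hx⟩
    · simp
    · calc s.card ≤ Fintype.card ↥X := by simpa using Finset.card_le_univ s
      _ = X.card := Fintype.card_coe X
      _ ≤ kk := hcard
      _ ≤ (P x.val).card := hX x.val x.2
      _ ≤ _ := Finset.card_le_card (Finset.subset_biUnion_of_mem (fun x : ↥X => P x.val) hx)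
  obtain ⟨f, hfinj, hf⟩ :=
    (Finset.all_card_le_biUnion_card_iff_exists_injective fun x : ↥X => P x.val).1 hhall
  refine ⟨fun v => if hv : v ∈ X then f ⟨v, hv⟩ else ⟨0, hr⟩, ?_, ?_⟩
  · intro x hx y hy hxy
    simp only [Set.mem_setOf_eq, Finset.mem_coe] at hx hy
    simp only [dif_pos hx, dif_pos hy] at hxy
    exact congrArg Subtype.val (hfinj hxy)
  · intro x hx
    simpa [dif_pos hx] using hf ⟨x, hx⟩

lemma pair_bound (d k h : ℕ) (hh : 2 ≤ h) (Y : Finset (Fin d → ℕ))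
    (KK : Finset (Fin k → Fin h → (Fin d → ℕ)))
    (hKK : ∀ T ∈ KK, (∀ ℓ i, T ℓ i ∈ Y) ∧ (∀ ℓ₁ ℓ₂ : Fin k, ∑ i, T ℓ₁ i = ∑ i, T ℓ₂ i))
    (p q : Fin k × Fin h) (hpq : p.1 ≠ q.1) :
    (KK.filter fun T => T p.1 p.2 = T q.1 q.2).card ≤ Y.card ^ (k * (h - 1)) := by
  classical
  obtain ⟨ℓ1, i1⟩ := p
  obtain ⟨ℓ2, j⟩ := q
  simp only at hpq ⊢
  have h0 : 0 < h := by omega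
  have h1 : 1 < h := hh
  set j' : Fin h := if j = (⟨0, h0⟩ : Fin h) then ⟨1, h1⟩ else ⟨0, h0⟩ with hj'def
  have hj' : j' ≠ j := by
    by_cases hc : j = (⟨0, h0⟩ : Fin h)
    · subst hc; simp [hj'def, Fin.ext_iff]
    · simp only [hj'def, if_neg hc]
      exact fun hx => hc hx.symm
  set e : Fin k → Fin h := fun ℓ => if ℓ = ℓ2 then j' else ⟨0, h0⟩ with hedef
  set dropped : Finset (Fin k × Fin h) :=
    insert (ℓ2, j) ((univ.erase ℓ1).image fun ℓ => (ℓ, e ℓ)) with hdset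
  have hdr : ∀ a b, ((a, b) ∈ dropped) ↔ ((a = ℓ2 ∧ b = j) ∨ (a ≠ ℓ1 ∧ b = e a)) := by
    intro a b
    simp only [hdset, mem_insert, mem_image, mem_erase, mem_univ, and_true, Prod.mk.injEq]
    constructor
    · rintro (⟨rfl, rfl⟩ | ⟨ℓ, hℓ, rfl, rfl⟩)
      · exact Or.inl ⟨rfl, rfl⟩
      · exact Or.inr ⟨hℓ, rfl⟩
    · rintro (⟨rfl, rfl⟩ | ⟨hne, rfl⟩)
      · exact Or.inl ⟨rfl, rfl⟩
      · exact Or.inr ⟨a, hne, rfl, rfl⟩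
  have hrow1 : ∀ i, (ℓ1, i) ∉ dropped := by
    intro i hi
    rcases (hdr ℓ1 i).1 hi with ⟨hc, _⟩ | ⟨hc, _⟩
    · exact hpq hc
    · exact hc rfl
  have hcardD : dropped.card = k := by
    have hnotmem : (ℓ2, j) ∉ (univ.erase ℓ1).image fun ℓ => (ℓ, e ℓ) := by
      rw [mem_image]
      rintro ⟨ℓ, hℓ, hmk⟩
      rw [Prod.mk.injEq] at hmk
      obtain ⟨rfl, hmk2⟩ := hmk
      rw [hedef] at hmk2
      simp only [if_pos rfl] at hmk2
      exact hj' hmk2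
    rw [hdset, card_insert_of_notMem hnotmem,
      Finset.card_image_of_injective _ (fun a b hab => congrArg Prod.fst hab),
      card_erase_of_mem (mem_univ ℓ1), card_univ, Fintype.card_fin]
    have : 0 < k := ℓ1.pos
    omega
  -- the target finset
  set tgt : Finset ((Fin k × Fin h) → (Fin d → ℕ)) :=
    Fintype.piFinset (fun pr => if pr ∈ dropped then ({0} : Finset (Fin d → ℕ)) else Y)
    with htgt
  have hcardtgt : tgt.card = Y.card ^ (k * (h - 1)) := by
    rw [htgt, Fintype.card_piFinset]
    have : ∀ pr : Fin k × Fin h,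
        (if pr ∈ dropped then ({0} : Finset (Fin d → ℕ)) else Y).card
          = if pr ∈ dropped then 1 else Y.card := by
      intro pr; split_ifs <;> simp
    rw [Finset.prod_congr rfl fun pr _ => this pr, Finset.prod_ite, Finset.prod_const,
      Finset.prod_const, one_pow, one_mul]
    congr 1
    have hsub : dropped ⊆ univ := subset_univ _
    have hfilt : univ.filter (fun pr => ¬ pr ∈ dropped) = univ \ dropped := by
      ext pr; simp [mem_sdiff]
    rw [hfilt, card_sdiff_of_subset hsub, card_univ, Fintype.card_prod, Fintype.card_fin,
      Fintype.card_fin, hcardD]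
    have hmul : k * (h - 1) + k = k * h := by rw [← Nat.mul_succ]; congr 1; omega
    omega
  rw [← hcardtgt]
  apply Finset.card_le_card_of_injOn
    (fun T pr => if pr ∈ dropped then (0 : Fin d → ℕ) else T pr.1 pr.2)
  · intro T hT
    rw [Finset.mem_coe, Fintype.mem_piFinset]
    intro pr
    by_cases hpr : pr ∈ dropped
    · simp [hpr]
    · simp only [if_neg hpr]
      exact ((hKK T (mem_filter.1 hT).1).1 pr.1 pr.2)
  · intro T hT T' hT' hΦ
    simp only [Finset.coe_filter, Set.mem_setOf_eq] at hT hT'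
    obtain ⟨hTK, hTeq⟩ := hT
    obtain ⟨hT'K, hT'eq⟩ := hT'
    have hkept : ∀ pr : Fin k × Fin h, pr ∉ dropped → T pr.1 pr.2 = T' pr.1 pr.2 := by
      intro pr hpr
      have := congrFun hΦ pr
      simpa [if_neg hpr] using this
    have hsumT := (hKK T hTK).2
    have hsumT' := (hKK T' hT'K).2
    have step1 : T ℓ1 = T' ℓ1 := funext fun i => hkept (ℓ1, i) (hrow1 i)
    have step2 : T ℓ2 j = T' ℓ2 j := by
      calc T ℓ2 j = T ℓ1 i1 := hTeq.symm
        _ = T' ℓ1 i1 := by rw [step1]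
        _ = T' ℓ2 j := hT'eq
    funext ℓ i
    by_cases hℓ1 : ℓ = ℓ1
    · subst hℓ1; rw [step1]
    -- off-diagonal entries of row ℓ
    have hoff : ∀ i', i' ≠ e ℓ → T ℓ i' = T' ℓ i' := by
      intro i' hi'
      by_cases hij : ℓ = ℓ2 ∧ i' = j
      · rw [hij.1, hij.2]; exact step2
      · refine hkept (ℓ, i') ?_
        intro hmem
        rcases (hdr ℓ i').1 hmem with ⟨hc1, hc2⟩ | ⟨_, hc⟩
        · exact hij ⟨hc1, hc2⟩
        · exact hi' hc
    have hsums : ∑ i', T ℓ i' = ∑ i', T' ℓ i' := by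
      calc ∑ i', T ℓ i' = ∑ i', T ℓ1 i' := hsumT ℓ ℓ1
        _ = ∑ i', T' ℓ1 i' := by rw [step1]
        _ = ∑ i', T' ℓ i' := hsumT' ℓ1 ℓ
    by_cases hie : i = e ℓ
    · subst hie
      exact sum_cancel (T ℓ) (T' ℓ) (e ℓ) hsums hoff
    · exact hoff i hie

lemma good_bound (d k h r : ℕ) (hk : 2 ≤ k) (hh : 2 ≤ h) (hr : k * h ≤ r)
    (A : Finset (Fin d → ℕ)) (P : (Fin d → ℕ) → Finset (Fin r))
    (Good : Finset (Fin k → Fin h → (Fin d → ℕ)))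
    (hGood : ∀ T ∈ Good,
      (∀ ℓ i, T ℓ i ∈ A.filter fun x => k * h ≤ (P x).card) ∧
      (∀ ℓ₁ ℓ₂ : Fin k, ∑ i, T ℓ₁ i = ∑ i, T ℓ₂ i) ∧
      Function.Injective (fun pr : Fin k × Fin h => T pr.1 pr.2)) :
    Good.card ≤ (k * h) ^ (k * h) * rainbowCount d k h r A P := by
  classical
  have hr0 : 0 < r := lt_of_lt_of_le (Nat.mul_pos (by omega) (by omega)) hr
  -- choose a rainbow coloring for each candidate kh-set
  have hex : ∀ X : Finset (Fin d → ℕ), ∃ φ : (Fin d → ℕ) → Fin r,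
      ((∀ x ∈ X, k * h ≤ (P x).card) ∧ X.card ≤ k * h) →
        (Set.InjOn φ X ∧ ∀ x ∈ X, φ x ∈ P x) := by
    intro X
    by_cases hX : (∀ x ∈ X, k * h ≤ (P x).card) ∧ X.card ≤ k * h
    · obtain ⟨φ, h1, h2⟩ := hall_coloring hr0 X P hX.1 hX.2
      exact ⟨φ, fun _ => ⟨h1, h2⟩⟩
    · exact ⟨fun _ => ⟨0, hr0⟩, fun hc => absurd hc hX⟩
  choose φf hφf using hex
  set toX : (Fin k → Fin h → (Fin d → ℕ)) → Finset (Fin d → ℕ) :=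
    fun T => univ.image fun pr : Fin k × Fin h => T pr.1 pr.2 with htoX
  set toS : (Fin k → Fin h → (Fin d → ℕ)) → Finset ((Fin d → ℕ) × Fin r) :=
    fun T => (toX T).image fun x => (x, φf (toX T) x) with htoS
  -- basic facts for good tuples
  have hXmem : ∀ T, ∀ x ∈ toX T, ∃ pr : Fin k × Fin h, T pr.1 pr.2 = x := by
    intro T x hx
    rw [htoX] at hx
    obtain ⟨pr, _, hpr⟩ := mem_image.1 hx
    exact ⟨pr, hpr⟩
  have hXcard : ∀ T ∈ Good, (toX T).card = k * h := by
    intro T hT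
    rw [htoX, Finset.card_image_of_injective _ (hGood T hT).2.2, card_univ,
      Fintype.card_prod, Fintype.card_fin, Fintype.card_fin]
  have hXsub : ∀ T ∈ Good, ∀ x ∈ toX T, x ∈ A ∧ k * h ≤ (P x).card := by
    intro T hT x hx
    obtain ⟨pr, hpr⟩ := hXmem T x hx
    have := (hGood T hT).1 pr.1 pr.2
    rw [hpr] at this
    exact mem_filter.1 this
  have hφ : ∀ T ∈ Good, Set.InjOn (φf (toX T)) (toX T) ∧
      ∀ x ∈ toX T, φf (toX T) x ∈ P x := by
    intro T hT
    exact hφf (toX T) ⟨fun x hx => (hXsub T hT x hx).2, le_of_eq (hXcard T hT)⟩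
  have hfst : ∀ T, (toS T).image Prod.fst = toX T := by
    intro T
    rw [htoS]
    simp only [Finset.image_image]
    exact Finset.image_id
  have hmemS : ∀ T, ∀ p ∈ toS T, p.1 ∈ toX T ∧ p = (p.1, φf (toX T) p.1) := by
    intro T p hp
    obtain ⟨x, hx, hxp⟩ := mem_image.1 hp
    subst hxp
    exact ⟨hx, rfl⟩
  -- each good tuple gives a rainbow subtemplate
  have hkey : ∀ T ∈ Good, IsRainbowSub d k h r A P (toS T) := by
    intro T hT
    obtain ⟨hinjφ, hpal⟩ := hφ T hT
    refine ⟨?_, ?_, ?_, ?_, ?_⟩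
    · intro p hp p' hp' hpp
      rw [Finset.mem_coe] at hp hp'
      rw [(hmemS T p hp).2, (hmemS T p' hp').2, hpp]
    · intro p hp p' hp' hpp
      rw [Finset.mem_coe] at hp hp'
      obtain ⟨hp1, hpe⟩ := hmemS T p hp
      obtain ⟨hp'1, hp'e⟩ := hmemS T p' hp'
      have : p.1 = p'.1 := by
        apply hinjφ hp1 hp'1
        rw [hpe] at hpp; rw [hp'e] at hpp
        exact hpp
      rw [hpe, hp'e, this]
    · rw [hfst]
      exact fun x hx => (hXsub T hT x hx).1
    · rw [hfst]
      constructor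
      · exact hXcard T hT
      · refine ⟨fun ℓ => univ.image (T ℓ), ?_, ?_, ?_, ?_⟩
        · intro ℓ
          have hrow : Function.Injective (T ℓ) := by
            intro i i' hii
            have := (hGood T hT).2.2 (a₁ := (ℓ, i)) (a₂ := (ℓ, i')) hii
            exact congrArg Prod.snd this
          rw [Finset.card_image_of_injective _ hrow, card_univ, Fintype.card_fin]
        · intro ℓ₁ ℓ₂ hne
          rw [Finset.disjoint_left]
          intro x hx1 hx2
          obtain ⟨i, _, hi⟩ := mem_image.1 hx1
          obtain ⟨i', _, hi'⟩ := mem_image.1 hx2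
          have hii : T ℓ₁ i = T ℓ₂ i' := by rw [hi, hi']
          have : ((ℓ₁, i) : Fin k × Fin h) = (ℓ₂, i') :=
            (hGood T hT).2.2 (a₁ := (ℓ₁, i)) (a₂ := (ℓ₂, i')) hii
          exact hne (congrArg Prod.fst this)
        · ext x
          constructor
          · intro hx
            obtain ⟨ℓ, -, hx2⟩ := mem_biUnion.1 hx
            obtain ⟨i, -, hi⟩ := mem_image.1 hx2
            exact mem_image.2 ⟨(ℓ, i), mem_univ _, hi⟩
          · intro hx
            obtain ⟨pr, -, hpr⟩ := mem_image.1 hx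
            exact mem_biUnion.2 ⟨pr.1, mem_univ _, mem_image.2 ⟨pr.2, mem_univ _, hpr⟩⟩
        · intro ℓ₁ ℓ₂
          have hsum : ∀ ℓ : Fin k, (univ.image (T ℓ)).sum id = ∑ i, T ℓ i := by
            intro ℓ
            rw [Finset.sum_image (fun i _ i' _ hii => congrArg Prod.snd
              ((hGood T hT).2.2 (a₁ := (ℓ, i)) (a₂ := (ℓ, i')) hii))]
            simp
          rw [hsum ℓ₁, hsum ℓ₂]
          exact (hGood T hT).2.1 ℓ₁ ℓ₂
    · intro p hp
      obtain ⟨hp1, hpe⟩ := hmemS T p hp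
      rw [hpe]
      exact hpal p.1 hp1
  -- fibers of toS are small
  have hfiber : ∀ S0 ∈ Good.image toS,
      (Good.filter fun T => toS T = S0).card ≤ (k * h) ^ (k * h) := by
    intro S0 hS0
    obtain ⟨T0, hT0, hT0S⟩ := mem_image.1 hS0
    have hXeq : ∀ T ∈ Good, toS T = S0 → toX T = toX T0 := by
      intro T hT hTS
      rw [← hfst T, ← hfst T0, hTS, hT0S]
    calc (Good.filter fun T => toS T = S0).card
        ≤ (Fintype.piFinset fun _ : Fin k × Fin h => toX T0).card := by
          apply Finset.card_le_card_of_injOn (fun T pr => T pr.1 pr.2)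
          · intro T hT
            rw [Finset.mem_coe, Fintype.mem_piFinset]
            intro pr
            obtain ⟨hTG, hTS⟩ := mem_filter.1 hT
            rw [← hXeq T hTG hTS, htoX]
            exact mem_image_of_mem _ (mem_univ pr)
          · intro T _ T' _ hTT
            funext ℓ i
            exact congrFun hTT (ℓ, i)
      _ = (k * h) ^ (k * h) := by
          rw [Fintype.card_piFinset, Finset.prod_const, card_univ, Fintype.card_prod,
            Fintype.card_fin, Fintype.card_fin, hXcard T0 hT0]
  have h1 : Good.card ≤ (k * h) ^ (k * h) * (Good.image toS).card :=
    Finset.card_le_mul_card_image (f := toS) Good _ hfiber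
  -- the image injects into rainbow subtemplates
  haveI : Finite {S : Finset ((Fin d → ℕ) × Fin r) // IsRainbowSub d k h r A P S} := by
    apply Finite.of_injective (β := {T : Finset ((Fin d → ℕ) × Fin r) //
      T ∈ (A ×ˢ (univ : Finset (Fin r))).powerset})
      (fun S => ⟨S.1, by
        rw [Finset.mem_powerset]
        intro p hp
        rw [Finset.mem_product]
        refine ⟨S.2.2.2.1 ?_, mem_univ _⟩
        exact mem_image_of_mem Prod.fst hp⟩)
    intro S S' hSS
    exact Subtype.ext (Subtype.mk_eq_mk.mp hSS)
  have h2 : (Good.image toS).card ≤ rainbowCount d k h r A P := by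
    rw [rainbowCount, ← Nat.card_eq_finsetCard]
    apply Nat.card_le_card_of_injective
      (fun x : ↥(Good.image toS) => (⟨x.1, by
        obtain ⟨T, hT, hTS⟩ := mem_image.1 x.2
        rw [← hTS]
        exact hkey T hT⟩ : {S : Finset ((Fin d → ℕ) × Fin r) // IsRainbowSub d k h r A P S}))
    intro x y hxy
    exact Subtype.ext (Subtype.mk_eq_mk.mp hxy)
  calc Good.card ≤ (k * h) ^ (k * h) * (Good.image toS).card := h1
    _ ≤ (k * h) ^ (k * h) * rainbowCount d k h r A P := Nat.mul_le_mul_left _ h2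

lemma nat_holder {ι : Type*} (G : Finset ι) (g : ι → ℕ) (k : ℕ) (hk : 1 ≤ k) :
    (∑ s ∈ G, g s) ^ k ≤ G.card ^ (k - 1) * ∑ s ∈ G, g s ^ k := by
  rcases G.eq_empty_or_nonempty with rfl | hG
  · simp [Nat.zero_pow (by omega : 0 < k)]
  have hpos : (0 : ℝ) < (G.card : ℝ) ^ (k - 1) := by
    have := hG.card_pos
    positivity
  have hreal := pow_sum_div_card_le_sum_pow (s := G) (f := fun s => (g s : ℝ))
    (fun i _ => by positivity) (k - 1)
  rw [div_le_iff₀ hpos] at hreal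
  have hk1 : k - 1 + 1 = k := by omega
  rw [hk1] at hreal
  have : ((∑ s ∈ G, g s : ℕ) : ℝ) ^ k ≤ ((G.card ^ (k - 1) * ∑ s ∈ G, g s ^ k : ℕ) : ℝ) := by
    push_cast
    calc ((∑ s ∈ G, (g s : ℝ)) ^ k) ≤ (∑ s ∈ G, (g s : ℝ) ^ k) * (G.card : ℝ) ^ (k - 1) :=
          hreal
      _ = (G.card : ℝ) ^ (k - 1) * ∑ s ∈ G, (g s : ℝ) ^ k := by ring
  exact_mod_cast this

lemma inj_lower {d hh : ℕ} (Y : Finset (Fin d → ℕ)) :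
    (Y.card + 1 - hh) ^ hh ≤
      ((Fintype.piFinset fun _ : Fin hh => Y).filter fun u => Function.Injective u).card := by
  classical
  calc (Y.card + 1 - hh) ^ hh ≤ Y.card.descFactorial hh := Nat.pow_sub_le_descFactorial _ _
    _ = Fintype.card (Fin hh ↪ ↥Y) := by
        rw [Fintype.card_embedding_eq, Fintype.card_coe, Fintype.card_fin]
    _ ≤ _ := by
        rw [← Finset.card_univ (α := Fin hh ↪ ↥Y)]
        apply Finset.card_le_card_of_injOn (fun e i => (e i : Fin d → ℕ))
        · intro e _
          rw [Finset.mem_coe, mem_filter, Fintype.mem_piFinset]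
          exact ⟨fun i => (e i).2, fun i i' hii => e.injective (Subtype.ext hii)⟩
        · intro e _ e' _ hee
          ext i x
          exact congrFun (congrFun hee i) x

lemma countdown (d k h r n : ℕ) (hk : 2 ≤ k) (hh : 2 ≤ h) (hr : k * h ≤ r)
    (A : Finset (Fin d → ℕ)) (hA : A ⊆ grid n d) (P : (Fin d → ℕ) → Finset (Fin r)) :
    ((A.filter fun x => k * h ≤ (P x).card).card + 1 - h) ^ (h * k) ≤
      ((h * n) ^ d) ^ (k - 1) *
        ((k * h) ^ (k * h) * rainbowCount d k h r A P +
          (k * h) ^ 4 * (A.filter fun x => k * h ≤ (P x).card).card ^ (k * (h - 1))) := by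
  classical
  set Y := A.filter fun x => k * h ≤ (P x).card with hY
  set G := grid (h * n) d with hG
  set Inj := (Fintype.piFinset fun _ : Fin h => Y).filter
    (fun u => Function.Injective u) with hInj
  set g : (Fin d → ℕ) → ℕ := fun s => ((Inj.filter fun u => ∑ i, u i = s)).card with hg
  set KK := (Fintype.piFinset fun _ : Fin k => Inj).filter
    (fun T => ∀ ℓ₁ ℓ₂ : Fin k, ∑ i, T ℓ₁ i = ∑ i, T ℓ₂ i) with hKK
  have hYgrid : ∀ x ∈ Y, x ∈ grid n d := fun x hx => hA (mem_filter.1 hx).1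
  have hInjmem : ∀ u ∈ Inj, (∀ i, u i ∈ Y) ∧ Function.Injective u := by
    intro u hu
    obtain ⟨h1, h2⟩ := mem_filter.1 hu
    exact ⟨Fintype.mem_piFinset.1 h1, h2⟩
  have hInjsum : ∀ u ∈ Inj, (∑ i, u i) ∈ G := fun u hu =>
    sum_mem_grid (by omega) u fun i => hYgrid _ ((hInjmem u hu).1 i)
  have hKKmem : ∀ T ∈ KK, (∀ ℓ, T ℓ ∈ Inj) ∧ ∀ ℓ₁ ℓ₂ : Fin k, ∑ i, T ℓ₁ i = ∑ i, T ℓ₂ i := by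
    intro T hT
    rw [hKK, mem_filter] at hT
    exact ⟨Fintype.mem_piFinset.1 hT.1, hT.2⟩
  set ℓ0 : Fin k := ⟨0, by omega⟩ with hℓ0
  have F1 : ∑ s ∈ G, g s = Inj.card :=
    (Finset.card_eq_sum_card_fiberwise hInjsum).symm
  have F3 : ∀ s, KK.filter (fun T => ∑ i, T ℓ0 i = s) =
      Fintype.piFinset (fun _ : Fin k => Inj.filter fun u => ∑ i, u i = s) := by
    intro s
    ext T
    simp only [hKK, mem_filter, Fintype.mem_piFinset]
    constructor
    · rintro ⟨⟨h1, h2⟩, h3⟩ ℓ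
      exact ⟨h1 ℓ, (h2 ℓ ℓ0).trans h3⟩
    · intro hall
      refine ⟨⟨fun ℓ => (hall ℓ).1, fun ℓ₁ ℓ₂ => ?_⟩, (hall ℓ0).2⟩
      rw [(hall ℓ₁).2, (hall ℓ₂).2]
  have F4 : KK.card = ∑ s ∈ G, g s ^ k := by
    rw [Finset.card_eq_sum_card_fiberwise (f := fun T => ∑ i, T ℓ0 i) (t := G)
      (fun T hT => hInjsum (T ℓ0) ((hKKmem T hT).1 ℓ0))]
    refine Finset.sum_congr rfl fun s _ => ?_
    rw [F3 s, Fintype.card_piFinset, Finset.prod_const, card_univ, Fintype.card_fin]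
  have F5 : KK.card =
      (KK.filter fun T => Function.Injective fun pr : Fin k × Fin h => T pr.1 pr.2).card +
      (KK.filter fun T => ¬ Function.Injective fun pr : Fin k × Fin h => T pr.1 pr.2).card :=
    (Finset.card_filter_add_card_filter_not _).symm
  have hKK' : ∀ T ∈ KK, (∀ ℓ i, T ℓ i ∈ Y) ∧ (∀ ℓ₁ ℓ₂ : Fin k, ∑ i, T ℓ₁ i = ∑ i, T ℓ₂ i) :=
    fun T hT => ⟨fun ℓ i => (hInjmem _ ((hKKmem T hT).1 ℓ)).1 i, (hKKmem T hT).2⟩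
  have F6 : (KK.filter fun T => ¬ Function.Injective fun pr : Fin k × Fin h => T pr.1 pr.2).card
      ≤ (k * h) ^ 4 * Y.card ^ (k * (h - 1)) := by
    set PR := (univ : Finset ((Fin k × Fin h) × (Fin k × Fin h))).filter
      (fun pq => pq.1.1 ≠ pq.2.1) with hPR
    have hsubset : (KK.filter fun T => ¬ Function.Injective fun pr : Fin k × Fin h => T pr.1 pr.2)
        ⊆ PR.biUnion fun pq => KK.filter fun T => T pq.1.1 pq.1.2 = T pq.2.1 pq.2.2 := by
      intro T hT
      obtain ⟨hTK, hTni⟩ := mem_filter.1 hT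
      rw [Function.not_injective_iff] at hTni
      obtain ⟨a, b, hab, hne⟩ := hTni
      have hane : a.1 ≠ b.1 := by
        intro hc
        apply hne
        have hrow := (hInjmem _ ((hKKmem T hTK).1 b.1)).2
        have hab' : T b.1 a.2 = T b.1 b.2 := hc ▸ hab
        exact Prod.ext hc (hrow hab')
      exact mem_biUnion.2 ⟨(a, b), mem_filter.2 ⟨mem_univ _, hane⟩,
        mem_filter.2 ⟨hTK, hab⟩⟩
    have hPRcard : PR.card ≤ (k * h) ^ 4 := by
      calc PR.card ≤ Fintype.card ((Fin k × Fin h) × (Fin k × Fin h)) := by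
            simpa using card_le_univ PR
        _ = (k * h) ^ 2 := by
            simp only [Fintype.card_prod, Fintype.card_fin]; ring
        _ ≤ (k * h) ^ 4 := Nat.pow_le_pow_right (Nat.mul_pos (lt_of_lt_of_le two_pos hk) (lt_of_lt_of_le two_pos hh)) (by norm_num)
    calc (KK.filter fun T => ¬ Function.Injective fun pr : Fin k × Fin h => T pr.1 pr.2).card
        ≤ ∑ pq ∈ PR, (KK.filter fun T => T pq.1.1 pq.1.2 = T pq.2.1 pq.2.2).card :=
          (Finset.card_le_card hsubset).trans Finset.card_biUnion_le
      _ ≤ PR.card • (Y.card ^ (k * (h - 1))) :=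
          Finset.sum_le_card_nsmul PR _ _ (fun pq hpq =>
            pair_bound d k h hh Y KK hKK' pq.1 pq.2 ((mem_filter.1 hpq).2))
      _ = PR.card * (Y.card ^ (k * (h - 1))) := smul_eq_mul _ _
      _ ≤ (k * h) ^ 4 * Y.card ^ (k * (h - 1)) := Nat.mul_le_mul_right _ hPRcard
  have F7 : (KK.filter fun T => Function.Injective fun pr : Fin k × Fin h => T pr.1 pr.2).card
      ≤ (k * h) ^ (k * h) * rainbowCount d k h r A P := by
    apply good_bound d k h r hk hh hr A P
    intro T hT
    obtain ⟨hTK, hTinj⟩ := mem_filter.1 hT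
    exact ⟨fun ℓ i => (hKK' T hTK).1 ℓ i, (hKK' T hTK).2, hTinj⟩
  calc (Y.card + 1 - h) ^ (h * k) = ((Y.card + 1 - h) ^ h) ^ k := by rw [← pow_mul]
    _ ≤ Inj.card ^ k := Nat.pow_le_pow_left (inj_lower Y) k
    _ = (∑ s ∈ G, g s) ^ k := by rw [F1]
    _ ≤ G.card ^ (k - 1) * ∑ s ∈ G, g s ^ k := nat_holder G g k (le_trans one_le_two hk)
    _ = G.card ^ (k - 1) * KK.card := by rw [F4]
    _ = ((h * n) ^ d) ^ (k - 1) * KK.card := by rw [hG, grid_card]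
    _ = ((h * n) ^ d) ^ (k - 1) *
        ((KK.filter fun T => Function.Injective fun pr : Fin k × Fin h => T pr.1 pr.2).card +
         (KK.filter fun T => ¬ Function.Injective fun pr : Fin k × Fin h => T pr.1 pr.2).card) := by
        rw [← F5]
    _ ≤ _ := Nat.mul_le_mul_left _ (Nat.add_le_add F7 F6)

lemma eventually_cond (c : ℕ) (C : ℝ) (hC : 0 < C) :
    ∀ᶠ n : ℕ in Filter.atTop,
      C ≤ Real.logb 2 n ∧ C * (Real.logb 2 n) ^ c ≤ (n : ℝ) := by
  have hlog2 : (0 : ℝ) < Real.log 2 := Real.log_pos (by norm_num)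
  have hcast : Filter.Tendsto (fun n : ℕ => (n : ℝ)) Filter.atTop Filter.atTop :=
    tendsto_natCast_atTop_atTop
  have h1 : ∀ᶠ n : ℕ in Filter.atTop, C ≤ Real.logb 2 n := by
    have : Filter.Tendsto (fun n : ℕ => Real.logb 2 n) Filter.atTop Filter.atTop :=
      (Real.tendsto_logb_atTop (by norm_num)).comp hcast
    exact this.eventually_ge_atTop C
  have hε : (0 : ℝ) < (Real.log 2) ^ c / C := by positivity
  have hev : ∀ᶠ x : ℝ in Filter.atTop,
      ‖Real.log x ^ c‖ ≤ ((Real.log 2) ^ c / C) * ‖id x‖ :=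
    Asymptotics.isLittleO_iff.mp Real.isLittleO_pow_log_id_atTop hε
  have h2' : ∀ᶠ x : ℝ in Filter.atTop, C * (Real.logb 2 x) ^ c ≤ x := by
    filter_upwards [hev, Filter.eventually_ge_atTop (1 : ℝ)] with x hx hx1
    have hlogx : (0 : ℝ) ≤ Real.log x := Real.log_nonneg hx1
    have hx0 : (0 : ℝ) ≤ x := le_trans zero_le_one hx1
    have hx' : Real.log x ^ c ≤ (Real.log 2) ^ c / C * x := by
      calc Real.log x ^ c ≤ ‖Real.log x ^ c‖ := by
            rw [Real.norm_eq_abs]; exact le_abs_self _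
        _ ≤ (Real.log 2) ^ c / C * ‖id x‖ := hx
        _ = (Real.log 2) ^ c / C * x := by
            rw [Real.norm_eq_abs, id_eq, abs_of_nonneg hx0]
    calc C * (Real.logb 2 x) ^ c = (C / (Real.log 2) ^ c) * Real.log x ^ c := by
          rw [Real.logb, div_pow]; ring
      _ ≤ (C / (Real.log 2) ^ c) * (((Real.log 2) ^ c / C) * x) :=
          mul_le_mul_of_nonneg_left hx' (by positivity)
      _ = x := by field_simp
  have h2 : ∀ᶠ n : ℕ in Filter.atTop, C * (Real.logb 2 n) ^ c ≤ (n : ℝ) :=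
    hcast.eventually h2'
  exact h1.and h2

lemma arith1 (k h : ℕ) (hk : 1 ≤ k) (hh : 1 ≤ h) :
    k * (h - 1) + 1 + (k - 1) = h * k := by
  cases k with
  | zero => omega
  | succ k => cases h with
    | zero => omega
    | succ h => simp only [Nat.succ_sub_one]; ring

lemma arith2 (k h : ℕ) (hk : 1 ≤ k) (hh : 1 ≤ h) :
    (4 * (k * (h - 1) + 1) + 5 * (k - 1)) + (k * (h - 1) + 1) = 5 * k * h := by
  cases k with
  | zero => omega
  | succ k => cases h with
    | zero => omega
    | succ h => simp only [Nat.succ_sub_one]; ring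

/-- templates with few rainbow-solution subtemplates have few points with
palettes of size at least kh. -/
theorem stmt14 (d k h r : ℕ) (hd : 1 ≤ d) (hk : 2 ≤ k) (hh : 2 ≤ h) (hr : k * h ≤ r) :
    ∃ N : ℕ, ∀ n : ℕ, N ≤ n → ∀ A : Finset (Fin d → ℕ), A ⊆ grid n d →
      (n : ℝ) ^ d / Real.logb 2 n ≤ (A.card : ℝ) →
      ∀ P : (Fin d → ℕ) → Finset (Fin r),
        (rainbowCount d k h r A P : ℝ) ≤
          (A.card : ℝ) ^ (k * (h - 1) + 1) / (Real.logb 2 n) ^ (5 * k * h) →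
        ((A.filter fun x => k * h ≤ (P x).card).card : ℝ) ≤
          (A.card : ℝ) / (Real.logb 2 n) ^ 4 := by
  classical
  have hkR : (2:ℝ) ≤ (k:ℝ) := by exact_mod_cast hk
  have hhR : (2:ℝ) ≤ (h:ℝ) := by exact_mod_cast hh
  -- the three "n large" conditions
  obtain ⟨N, hN⟩ := Filter.eventually_atTop.mp
    (((eventually_cond 5 (2*(h:ℝ)+1) (by positivity)).and
      ((eventually_cond (4*(k*(h-1)+1)+5*(k-1)+1)
          (4 * ((2:ℝ)^(h*k) * ((h:ℝ)^d)^(k-1)) * ((k:ℝ)*(h:ℝ))^4) (by positivity)).and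
        ((eventually_cond 0
            (max 2 (4 * ((2:ℝ)^(h*k) * ((h:ℝ)^d)^(k-1)) * ((k:ℝ)*(h:ℝ))^(k*h)))
            (lt_of_lt_of_le two_pos (le_max_left _ _))).and
          (Filter.eventually_ge_atTop 2)))))
  refine ⟨N, fun n hn A hA hAcard P hRP => ?_⟩
  obtain ⟨⟨hL2h, hn2h⟩, ⟨-, hnW2⟩, ⟨hLmax, -⟩, hn2⟩ := hN n hn
  set L := Real.logb 2 (n : ℝ) with hLdef
  set a := ((A.card : ℕ) : ℝ) with hadef
  set m := (A.filter fun x => k * h ≤ (P x).card).card with hmdef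
  by_contra hcon
  push_neg at hcon
  -- basic facts
  have hL2 : (2:ℝ) ≤ L := le_trans (le_max_left _ _) hLmax
  have hLW : 4 * ((2:ℝ)^(h*k) * ((h:ℝ)^d)^(k-1)) * ((k:ℝ)*(h:ℝ))^(k*h) ≤ L :=
    le_trans (le_max_right _ _) hLmax
  have hL0 : (0:ℝ) < L := by linarith
  have hL1 : (1:ℝ) ≤ L := by linarith
  have hn1 : (1:ℝ) ≤ (n:ℝ) := by exact_mod_cast le_trans one_le_two hn2
  have hn0 : (0:ℝ) < (n:ℝ) := lt_of_lt_of_le zero_lt_one hn1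
  have hnd : (n:ℝ) ≤ (n:ℝ)^d := le_self_pow₀ hn1 (by omega)
  have ha0 : (0:ℝ) < a := lt_of_lt_of_le (by positivity) hAcard
  have h2 : (n:ℝ)^d ≤ a * L := (div_le_iff₀ hL0).mp hAcard
  have h1 : a < (m:ℝ) * L^4 := (div_lt_iff₀ (by positivity)).mp hcon
  have hμ0 : (0:ℝ) ≤ (m:ℝ) := Nat.cast_nonneg m
  have hμa : (m:ℝ) ≤ a := by
    have : m ≤ A.card := card_le_card (filter_subset _ A)
    rw [hadef]
    exact_mod_cast this
  have hndμ : (n:ℝ)^d ≤ (m:ℝ) * L^5 := by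
    calc (n:ℝ)^d ≤ a * L := h2
      _ ≤ ((m:ℝ) * L^4) * L := mul_le_mul_of_nonneg_right h1.le hL0.le
      _ = (m:ℝ) * L^5 := by ring
  have hμ2h : 2*(h:ℝ)+1 ≤ (m:ℝ) := by
    have h5 : (0:ℝ) < L^5 := by positivity
    have hnn : (2*(h:ℝ)+1) * L^5 ≤ (m:ℝ) * L^5 :=
      le_trans hn2h (le_trans hnd hndμ)
    exact le_of_mul_le_mul_right hnn h5
  have hm2h : 2*h ≤ m := by
    have : ((2*h : ℕ) : ℝ) ≤ (m:ℝ) := by push_cast; linarith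
    exact_mod_cast this
  have hhm : h ≤ m + 1 := by omega
  -- cast the counting lemma
  have hcdR : ((m:ℝ)+1-(h:ℝ))^(h*k) ≤
      ((h:ℝ)^d)^(k-1) * ((n:ℝ)^d)^(k-1) *
        (((k:ℝ)*(h:ℝ))^(k*h) * (rainbowCount d k h r A P : ℝ) +
          ((k:ℝ)*(h:ℝ))^4 * (m:ℝ)^(k*(h-1))) := by
    have hc := (Nat.cast_le (α := ℝ)).mpr (countdown d k h r n hk hh hr A hA P)
    rw [← hmdef] at hc
    push_cast [Nat.cast_sub hhm] at hc
    calc ((m:ℝ)+1-(h:ℝ))^(h*k)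
        ≤ (((h:ℝ)*(n:ℝ))^d)^(k-1) *
            (((k:ℝ)*(h:ℝ))^(k*h) * (rainbowCount d k h r A P : ℝ) +
              ((k:ℝ)*(h:ℝ))^4 * (m:ℝ)^(k*(h-1))) := hc
      _ = _ := by rw [mul_pow, mul_pow]
  have hμX : (m:ℝ) ≤ 2 * ((m:ℝ)+1-(h:ℝ)) := by linarith
  have hμhk : (m:ℝ)^(h*k) ≤
      (2:ℝ)^(h*k) * (((h:ℝ)^d)^(k-1) * ((n:ℝ)^d)^(k-1) *
        (((k:ℝ)*(h:ℝ))^(k*h) * (rainbowCount d k h r A P : ℝ) +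
          ((k:ℝ)*(h:ℝ))^4 * (m:ℝ)^(k*(h-1)))) := by
    calc (m:ℝ)^(h*k) ≤ (2 * ((m:ℝ)+1-(h:ℝ)))^(h*k) := pow_le_pow_left₀ hμ0 hμX _
      _ = (2:ℝ)^(h*k) * ((m:ℝ)+1-(h:ℝ))^(h*k) := mul_pow _ _ _
      _ ≤ _ := mul_le_mul_of_nonneg_left hcdR (by positivity)
  -- step A bounds
  have hA1 : a^(k*(h-1)+1) ≤ (m:ℝ)^(k*(h-1)+1) * L^(4*(k*(h-1)+1)) := by
    calc a^(k*(h-1)+1) ≤ ((m:ℝ) * L^4)^(k*(h-1)+1) :=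
          pow_le_pow_left₀ (le_of_lt ha0) h1.le _
      _ = (m:ℝ)^(k*(h-1)+1) * (L^4)^(k*(h-1)+1) := mul_pow _ _ _
      _ = (m:ℝ)^(k*(h-1)+1) * L^(4*(k*(h-1)+1)) := by rw [← pow_mul]
  have hA2 : ((n:ℝ)^d)^(k-1) ≤ (m:ℝ)^(k-1) * L^(5*(k-1)) := by
    calc ((n:ℝ)^d)^(k-1) ≤ ((m:ℝ) * L^5)^(k-1) := pow_le_pow_left₀ (by positivity) hndμ _
      _ = (m:ℝ)^(k-1) * (L^5)^(k-1) := mul_pow _ _ _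
      _ = (m:ℝ)^(k-1) * L^(5*(k-1)) := by rw [← pow_mul]
  have hNd0 : (0:ℝ) < ((n:ℝ)^d)^(k-1) := pow_pos (pow_pos hn0 d) _
  -- step B
  have hB : a^(k*(h-1)+1) ≤
      ((2:ℝ)^(h*k) * ((h:ℝ)^d)^(k-1)) *
        (((k:ℝ)*(h:ℝ))^(k*h) * (rainbowCount d k h r A P : ℝ) +
          ((k:ℝ)*(h:ℝ))^4 * (m:ℝ)^(k*(h-1))) * L^(4*(k*(h-1)+1)+5*(k-1)) := by
    refine le_of_mul_le_mul_right ?_ hNd0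
    calc a^(k*(h-1)+1) * ((n:ℝ)^d)^(k-1)
        ≤ ((m:ℝ)^(k*(h-1)+1) * L^(4*(k*(h-1)+1))) * ((n:ℝ)^d)^(k-1) :=
          mul_le_mul_of_nonneg_right hA1 hNd0.le
      _ ≤ ((m:ℝ)^(k*(h-1)+1) * L^(4*(k*(h-1)+1))) * ((m:ℝ)^(k-1) * L^(5*(k-1))) :=
          mul_le_mul_of_nonneg_left hA2 (by positivity)
      _ = ((m:ℝ)^(k*(h-1)+1) * (m:ℝ)^(k-1)) * (L^(4*(k*(h-1)+1)) * L^(5*(k-1))) := by ring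
      _ = (m:ℝ)^(h*k) * L^(4*(k*(h-1)+1)+5*(k-1)) := by
          rw [← pow_add, ← pow_add, arith1 k h (by omega) (by omega)]
      _ ≤ ((2:ℝ)^(h*k) * (((h:ℝ)^d)^(k-1) * ((n:ℝ)^d)^(k-1) *
            (((k:ℝ)*(h:ℝ))^(k*h) * (rainbowCount d k h r A P : ℝ) +
              ((k:ℝ)*(h:ℝ))^4 * (m:ℝ)^(k*(h-1))))) * L^(4*(k*(h-1)+1)+5*(k-1)) :=
          mul_le_mul_of_nonneg_right hμhk (by positivity)
      _ = _ := by ring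
  -- step C
  have hRL : (rainbowCount d k h r A P : ℝ) * L^(5*k*h) ≤ a^(k*(h-1)+1) :=
    (le_div_iff₀ (by positivity)).mp hRP
  have hLsplit : L^(5*k*h) = L^(4*(k*(h-1)+1)+5*(k-1)) * L^(k*(h-1)+1) := by
    rw [← pow_add]
    congr 1
    have := arith2 k h (by omega) (by omega)
    omega
  have hE0 : (0:ℝ) < L^(k*(h-1)+1) := by positivity
  have hC : 4 * ((2:ℝ)^(h*k) * ((h:ℝ)^d)^(k-1)) * ((k:ℝ)*(h:ℝ))^(k*h) *
      ((rainbowCount d k h r A P : ℝ) * L^(4*(k*(h-1)+1)+5*(k-1))) ≤ a^(k*(h-1)+1) := by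
    have h4 : 4 * ((2:ℝ)^(h*k) * ((h:ℝ)^d)^(k-1)) * ((k:ℝ)*(h:ℝ))^(k*h) ≤ L^(k*(h-1)+1) :=
      le_trans hLW (le_self_pow₀ hL1 (by omega))
    have hRc : (rainbowCount d k h r A P : ℝ) * L^(4*(k*(h-1)+1)+5*(k-1)) * L^(k*(h-1)+1)
        ≤ a^(k*(h-1)+1) := by
      calc (rainbowCount d k h r A P : ℝ) * L^(4*(k*(h-1)+1)+5*(k-1)) * L^(k*(h-1)+1)
          = (rainbowCount d k h r A P : ℝ) * L^(5*k*h) := by rw [hLsplit]; ring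
        _ ≤ a^(k*(h-1)+1) := hRL
    refine le_of_mul_le_mul_right ?_ hE0
    calc 4 * ((2:ℝ)^(h*k) * ((h:ℝ)^d)^(k-1)) * ((k:ℝ)*(h:ℝ))^(k*h) *
        ((rainbowCount d k h r A P : ℝ) * L^(4*(k*(h-1)+1)+5*(k-1))) * L^(k*(h-1)+1)
        = (4 * ((2:ℝ)^(h*k) * ((h:ℝ)^d)^(k-1)) * ((k:ℝ)*(h:ℝ))^(k*h)) *
          ((rainbowCount d k h r A P : ℝ) * L^(4*(k*(h-1)+1)+5*(k-1)) * L^(k*(h-1)+1)) := by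
          ring
      _ ≤ L^(k*(h-1)+1) * a^(k*(h-1)+1) :=
          mul_le_mul h4 hRc (by positivity) (by positivity)
      _ = a^(k*(h-1)+1) * L^(k*(h-1)+1) := by ring
  -- step D
  have hD : 4 * ((2:ℝ)^(h*k) * ((h:ℝ)^d)^(k-1)) * ((k:ℝ)*(h:ℝ))^4 *
      ((m:ℝ)^(k*(h-1)) * L^(4*(k*(h-1)+1)+5*(k-1))) ≤ a^(k*(h-1)+1) := by
    have haW : 4 * ((2:ℝ)^(h*k) * ((h:ℝ)^d)^(k-1)) * ((k:ℝ)*(h:ℝ))^4 *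
        L^(4*(k*(h-1)+1)+5*(k-1)) ≤ a := by
      have hstep : 4 * ((2:ℝ)^(h*k) * ((h:ℝ)^d)^(k-1)) * ((k:ℝ)*(h:ℝ))^4 *
          L^(4*(k*(h-1)+1)+5*(k-1)) * L ≤ a * L := by
        calc 4 * ((2:ℝ)^(h*k) * ((h:ℝ)^d)^(k-1)) * ((k:ℝ)*(h:ℝ))^4 *
            L^(4*(k*(h-1)+1)+5*(k-1)) * L
            = 4 * ((2:ℝ)^(h*k) * ((h:ℝ)^d)^(k-1)) * ((k:ℝ)*(h:ℝ))^4 *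
              L^(4*(k*(h-1)+1)+5*(k-1)+1) := by rw [pow_succ]; ring
          _ ≤ (n:ℝ) := hnW2
          _ ≤ (n:ℝ)^d := hnd
          _ ≤ a * L := h2
      exact le_of_mul_le_mul_right hstep hL0
    have hμe1 : (m:ℝ)^(k*(h-1)) ≤ a^(k*(h-1)) := pow_le_pow_left₀ hμ0 hμa _
    calc 4 * ((2:ℝ)^(h*k) * ((h:ℝ)^d)^(k-1)) * ((k:ℝ)*(h:ℝ))^4 *
        ((m:ℝ)^(k*(h-1)) * L^(4*(k*(h-1)+1)+5*(k-1)))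
        = (4 * ((2:ℝ)^(h*k) * ((h:ℝ)^d)^(k-1)) * ((k:ℝ)*(h:ℝ))^4 *
            L^(4*(k*(h-1)+1)+5*(k-1))) * (m:ℝ)^(k*(h-1)) := by ring
      _ ≤ a * a^(k*(h-1)) := mul_le_mul haW hμe1 (by positivity) ha0.le
      _ = a^(k*(h-1)+1) := by rw [pow_succ]; ring
  -- conclude
  have hexp : 4 * (((2:ℝ)^(h*k) * ((h:ℝ)^d)^(k-1)) *
      (((k:ℝ)*(h:ℝ))^(k*h) * (rainbowCount d k h r A P : ℝ) +
        ((k:ℝ)*(h:ℝ))^4 * (m:ℝ)^(k*(h-1))) * L^(4*(k*(h-1)+1)+5*(k-1)))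
      = 4 * ((2:ℝ)^(h*k) * ((h:ℝ)^d)^(k-1)) * ((k:ℝ)*(h:ℝ))^(k*h) *
          ((rainbowCount d k h r A P : ℝ) * L^(4*(k*(h-1)+1)+5*(k-1))) +
        4 * ((2:ℝ)^(h*k) * ((h:ℝ)^d)^(k-1)) * ((k:ℝ)*(h:ℝ))^4 *
          ((m:ℝ)^(k*(h-1)) * L^(4*(k*(h-1)+1)+5*(k-1))) := by ring
  have hfinal : 4 * a^(k*(h-1)+1) ≤ 2 * a^(k*(h-1)+1) := by
    have h4B := mul_le_mul_of_nonneg_left hB (by norm_num : (0:ℝ) ≤ 4)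
    rw [hexp] at h4B
    linarith
  have haE : (0:ℝ) < a^(k*(h-1)+1) := pow_pos ha0 _
  linarith
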